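/- Let V be a (2n+1)-dimensional real vector space carrying two cosymplectic structures (b₁,ψ₁) and (b₂,ψ₂), and let U be a subspace which is Lagrangian-like for both. Then there exists a linear isomorphism L : V → V with L restricted to U equal to the identity, L*ψ₂ = ψ₁ and L*b₂ = b₁. -/

import Mathlib

open Module Submodule

variable {V : Type*} [AddCommGroup V] [Module ℝ V]

/-- The map `Ĩ_{ψ,b}` sending `v` to the functional `y ↦ b v y + ψ v * ψ y`. -/
noncomputable def Itilde (b : V →ₗ[ℝ] V →ₗ[ℝ] ℝ) (ψ : V →ₗ[ℝ] ℝ) :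
    V →ₗ[ℝ] V →ₗ[ℝ] ℝ :=
  b + ψ.smulRight ψ

/-- `(V, b, ψ)` is a cosymplectic vector space. -/
def IsCosymplectic (b : V →ₗ[ℝ] V →ₗ[ℝ] ℝ) (ψ : V →ₗ[ℝ] ℝ) : Prop :=
  (∀ x y, b x y = - b y x) ∧ ψ ≠ 0 ∧ Function.Bijective (Itilde b ψ)

/-- The cosymplectic orthogonal `F^{b,ψ}` of a subspace `F`. -/
noncomputable def cosymOrth (b : V →ₗ[ℝ] V →ₗ[ℝ] ℝ) (ψ : V →ₗ[ℝ] ℝ)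
    (F : Submodule ℝ V) : Submodule ℝ V where
  carrier := {x | ∀ y ∈ F, Itilde b ψ x y = 0}
  add_mem' := by
    intro a b' ha hb y hy
    simp only [map_add, LinearMap.add_apply, ha y hy, hb y hy, add_zero]
  zero_mem' := by intro y hy; simp
  smul_mem' := by
    intro c x hx y hy
    simp only [map_smul, LinearMap.smul_apply, hx y hy, smul_zero]

/-- `F` is a Lagrangian-like subspace of `(V,b,ψ)` with Reeb vector `ξ`:
isotropic, does not contain the Reeb vector, and `F^{b,ψ} = span(ξ) ⊕ F`. -/
def IsLagrangianLike (b : V →ₗ[ℝ] V →ₗ[ℝ] ℝ) (ψ : V →ₗ[ℝ] ℝ) (ξ : V)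
    (F : Submodule ℝ V) : Prop :=
  (∀ x ∈ F, ∀ y ∈ F, Itilde b ψ x y = 0) ∧ ξ ∉ F ∧
    Disjoint (Submodule.span ℝ {ξ}) F ∧
    cosymOrth b ψ F = Submodule.span ℝ {ξ} ⊔ F

lemma Itilde_apply (b : V →ₗ[ℝ] V →ₗ[ℝ] ℝ) (ψ : V →ₗ[ℝ] ℝ) (x y : V) :
    Itilde b ψ x y = b x y + ψ x * ψ y := by
  simp [Itilde, smul_eq_mul]

section aux

variable (b : V →ₗ[ℝ] V →ₗ[ℝ] ℝ) (ψ : V →ₗ[ℝ] ℝ) (ξ : V) (U : Submodule ℝ V)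

lemma aux_psiU (hanti : ∀ x y, b x y = - b y x)
    (hiso : ∀ x ∈ U, ∀ y ∈ U, Itilde b ψ x y = 0) :
    ∀ u ∈ U, ψ u = 0 := by
  intro u hu
  have h1 := hiso u hu u hu
  rw [Itilde_apply] at h1
  have h2 : b u u = 0 := by have := hanti u u; linarith
  have h3 : ψ u * ψ u = 0 := by linarith
  exact mul_self_eq_zero.mp h3

lemma aux_bU (hanti : ∀ x y, b x y = - b y x)
    (hiso : ∀ x ∈ U, ∀ y ∈ U, Itilde b ψ x y = 0) :
    ∀ u ∈ U, ∀ v ∈ U, b u v = 0 := by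
  intro u hu v hv
  have h1 := hiso u hu v hv
  rw [Itilde_apply, aux_psiU b ψ U hanti hiso u hu] at h1
  linarith

/-- Nondegeneracy of `b` on `ker ψ`. -/
lemma aux_nondeg (hanti : ∀ x y, b x y = - b y x)
    (hinj : Function.Injective (Itilde b ψ))
    (hξ1 : ψ ξ = 1) (hξ2 : ∀ y, b ξ y = 0) :
    ∀ h : V, ψ h = 0 → (∀ y, ψ y = 0 → b h y = 0) → h = 0 := by
  intro h hψ hb
  have hz : Itilde b ψ h = 0 := by
    ext y
    have hy : ψ (y - ψ y • ξ) = 0 := by simp [hξ1]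
    have h1 : b h (y - ψ y • ξ) = 0 := hb _ hy
    have h2 : b h ξ = 0 := by rw [hanti]; simp [hξ2]
    rw [map_sub, map_smul, h2] at h1
    simp only [LinearMap.zero_apply]
    rw [Itilde_apply, hψ]
    simp only [zero_mul, add_zero]
    simpa using h1
  exact hinj (by rw [hz, map_zero])

/-- The pairing between `U` and a complement `C` of `U` inside `ker ψ` is
perfect, in both directions. -/
lemma aux_pairing [FiniteDimensional ℝ V]
    (hcos : IsCosymplectic b ψ) (hξ1 : ψ ξ = 1) (hξ2 : ∀ y, b ξ y = 0)
    (hU : IsLagrangianLike b ψ ξ U)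
    (C : Submodule ℝ V) (hCU : C ⊓ U = ⊥) (hCsup : C ⊔ U = LinearMap.ker ψ) :
    Function.Bijective (LinearMap.compl₁₂ b U.subtype C.subtype) ∧
      Function.Bijective (LinearMap.compl₁₂ b U.subtype C.subtype).flip := by
  obtain ⟨hanti, -, hbij⟩ := hcos
  have hψU : ∀ u ∈ U, ψ u = 0 := aux_psiU b ψ U hanti hU.1
  have hbU : ∀ u ∈ U, ∀ v ∈ U, b u v = 0 := aux_bU b ψ U hanti hU.1
  have hCH : C ≤ LinearMap.ker ψ := hCsup ▸ le_sup_left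
  -- injectivity U → Dual C
  have inj₁ : Function.Injective (LinearMap.compl₁₂ b U.subtype C.subtype) := by
    rw [injective_iff_map_eq_zero]
    intro u hu0
    have hb0 : ∀ c ∈ C, b (u : V) c = 0 := by
      intro c hc
      have := LinearMap.congr_fun hu0 ⟨c, hc⟩
      simpa using this
    have hker : ∀ y, ψ y = 0 → b (u : V) y = 0 := by
      intro y hy
      have : y ∈ C ⊔ U := by rw [hCsup]; exact hy
      obtain ⟨c, hc, u', hu', rfl⟩ := Submodule.mem_sup.mp this
      rw [map_add, hb0 c hc, hbU u u.2 u' hu', add_zero]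
    have := aux_nondeg b ψ ξ hanti hbij.injective hξ1 hξ2 (u : V) (hψU u u.2) hker
    exact Subtype.ext this
  -- injectivity C → Dual U
  have inj₂ : Function.Injective (LinearMap.compl₁₂ b U.subtype C.subtype).flip := by
    rw [injective_iff_map_eq_zero]
    intro c hc0
    have hb0 : ∀ u ∈ U, b u (c : V) = 0 := by
      intro u hu
      have := LinearMap.congr_fun hc0 ⟨u, hu⟩
      simpa using this
    have hmem : (c : V) ∈ cosymOrth b ψ U := by
      intro y hy
      rw [Itilde_apply, hψU y hy, mul_zero, add_zero, hanti, hb0 y hy, neg_zero]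
    rw [hU.2.2.2] at hmem
    obtain ⟨s, hs, u, hu, hsum⟩ := Submodule.mem_sup.mp hmem
    obtain ⟨a, rfl⟩ := Submodule.mem_span_singleton.mp hs
    have hψc : ψ (c : V) = 0 := hCH c.2
    have ha : a = 0 := by
      rw [← hsum, map_add, map_smul, hξ1, hψU u hu] at hψc
      simpa using hψc
    have hcu : (c : V) ∈ U := by
      rw [← hsum, ha, zero_smul, zero_add]; exact hu
    have : (c : V) ∈ C ⊓ U := ⟨c.2, hcu⟩
    rw [hCU] at this
    exact Subtype.ext this
  -- finrank comparison
  have hfin1 : finrank ℝ U ≤ finrank ℝ C := by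
    have := LinearMap.finrank_le_finrank_of_injective inj₁
    rwa [Subspace.dual_finrank_eq] at this
  have hfin2 : finrank ℝ C ≤ finrank ℝ U := by
    have := LinearMap.finrank_le_finrank_of_injective inj₂
    rwa [Subspace.dual_finrank_eq] at this
  have hd1 : finrank ℝ U = finrank ℝ (Module.Dual ℝ C) := by
    rw [Subspace.dual_finrank_eq]; omega
  have hd2 : finrank ℝ C = finrank ℝ (Module.Dual ℝ U) := by
    rw [Subspace.dual_finrank_eq]; omega
  exact ⟨⟨inj₁, (LinearMap.injective_iff_surjective_of_finrank_eq_finrank hd1).mp inj₁⟩,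
    ⟨inj₂, (LinearMap.injective_iff_surjective_of_finrank_eq_finrank hd2).mp inj₂⟩⟩

/-- Existence of an isotropic (Lagrangian) complement of `U` inside `ker ψ`. -/
lemma aux_exists_compl [FiniteDimensional ℝ V]
    (hcos : IsCosymplectic b ψ) (hξ1 : ψ ξ = 1) (hξ2 : ∀ y, b ξ y = 0)
    (hU : IsLagrangianLike b ψ ξ U) :
    ∃ C : Submodule ℝ V, C ⊓ U = ⊥ ∧ C ⊔ U = LinearMap.ker ψ ∧
      ∀ x ∈ C, ∀ y ∈ C, b x y = 0 := by
  have hanti := hcos.1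
  have hψU : ∀ u ∈ U, ψ u = 0 := aux_psiU b ψ U hanti hU.1
  have hbU : ∀ u ∈ U, ∀ v ∈ U, b u v = 0 := aux_bU b ψ U hanti hU.1
  set H := LinearMap.ker ψ with hH
  have hUH : U ≤ H := fun u hu => by
    simp only [hH, LinearMap.mem_ker]; exact hψU u hu
  obtain ⟨D, hD⟩ := Submodule.exists_isCompl (U.comap H.subtype)
  set C₀ := D.map H.subtype with hC₀def
  have hmapU : (U.comap H.subtype).map H.subtype = U := by
    rw [Submodule.map_comap_subtype]
    exact inf_eq_right.mpr hUH
  have h1 : C₀ ⊓ U = ⊥ := by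
    rw [hC₀def, ← hmapU, ← Submodule.map_inf _ (Submodule.injective_subtype H)]
    rw [inf_comm, disjoint_iff.mp hD.disjoint, Submodule.map_bot]
  have h2 : C₀ ⊔ U = H := by
    rw [hC₀def, ← hmapU, ← Submodule.map_sup, sup_comm, codisjoint_iff.mp hD.codisjoint,
      Submodule.map_top, Submodule.range_subtype]
  -- perfect pairing, used to build the correction map ρ
  obtain ⟨hp, -⟩ := aux_pairing b ψ ξ U hcos hξ1 hξ2 hU C₀ h1 h2
  set p : U →ₗ[ℝ] Module.Dual ℝ C₀ := LinearMap.compl₁₂ b U.subtype C₀.subtype with hpdef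
  set eU := LinearEquiv.ofBijective p hp with heU
  set σ : C₀ →ₗ[ℝ] Module.Dual ℝ C₀ := LinearMap.compl₁₂ b C₀.subtype C₀.subtype with hσdef
  set ρ : C₀ →ₗ[ℝ] U := eU.symm.toLinearMap ∘ₗ ((1/2 : ℝ) • σ) with hρdef
  have hρ : ∀ c c' : C₀, b ((ρ c : U) : V) (c' : V) = (1/2) * b (c : V) (c' : V) := by
    intro c c'
    have h3 : p (ρ c) = ((1/2 : ℝ) • σ) c := by
      rw [hρdef]
      exact eU.apply_symm_apply _
    have h4 := LinearMap.congr_fun h3 c'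
    simpa [hpdef, hσdef, smul_eq_mul] using h4
  set j : C₀ →ₗ[ℝ] V := C₀.subtype - U.subtype ∘ₗ ρ with hjdef
  have hjapp : ∀ c : C₀, j c = (c : V) - ((ρ c : U) : V) := fun c => rfl
  refine ⟨LinearMap.range j, ?_, ?_, ?_⟩
  · -- disjoint from U
    rw [eq_bot_iff]
    rintro x ⟨hxj, hxU⟩
    obtain ⟨c, rfl⟩ := hxj
    have hcU : (c : V) ∈ U := by
      have : (c : V) = j c + ((ρ c : U) : V) := by rw [hjapp]; abel
      rw [this]
      exact Submodule.add_mem U hxU (ρ c).2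
    have : (c : V) ∈ C₀ ⊓ U := ⟨c.2, hcU⟩
    rw [h1] at this
    have hc0 : c = 0 := Subtype.ext this
    simp [hc0]
  · -- sup is ker ψ
    apply le_antisymm
    · apply sup_le
      · rintro x ⟨c, rfl⟩
        rw [hjapp]
        exact Submodule.sub_mem H ((h2 ▸ le_sup_left : C₀ ≤ H) c.2) (hUH (ρ c).2)
      · exact hUH
    · intro x hx
      rw [← h2] at hx
      obtain ⟨c, hc, u, hu, rfl⟩ := Submodule.mem_sup.mp hx
      have : c + u = j ⟨c, hc⟩ + (((ρ ⟨c, hc⟩ : U) : V) + u) := by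
        rw [hjapp]; abel
      rw [this]
      exact Submodule.add_mem _ (Submodule.mem_sup_left ⟨⟨c, hc⟩, rfl⟩)
        (Submodule.mem_sup_right (Submodule.add_mem U (ρ ⟨c, hc⟩).2 hu))
  · -- isotropy
    rintro x ⟨c, rfl⟩ y ⟨c', rfl⟩
    rw [hjapp, hjapp]
    have e1 : b ((ρ c : U) : V) ((ρ c' : U) : V) = 0 := hbU _ (ρ c).2 _ (ρ c').2
    have e2 := hρ c c'
    have e3 : b (c : V) ((ρ c' : U) : V) = (1/2) * b (c : V) (c' : V) := by
      rw [hanti]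
      have := hρ c' c
      rw [this, hanti (c' : V) (c : V)]
      ring
    simp only [map_sub, LinearMap.sub_apply]
    linarith

end aux

/-- if `U` is Lagrangian-like for two cosymplectic structures
`(b₁,ψ₁)` and `(b₂,ψ₂)` on `V`, then there is a linear isomorphism `L` of `V`
fixing `U` pointwise with `L*ψ₂ = ψ₁` and `L*b₂ = b₁`. -/
theorem exists_linearEquiv_of_biLagrangian [FiniteDimensional ℝ V] (n : ℕ)
    (hdim : finrank ℝ V = 2 * n + 1)
    (b₁ b₂ : V →ₗ[ℝ] V →ₗ[ℝ] ℝ) (ψ₁ ψ₂ : V →ₗ[ℝ] ℝ)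
    (h₁ : IsCosymplectic b₁ ψ₁) (h₂ : IsCosymplectic b₂ ψ₂)
    (ξ₁ ξ₂ : V) (hξ₁1 : ψ₁ ξ₁ = 1) (hξ₁2 : ∀ y, b₁ ξ₁ y = 0)
    (hξ₂1 : ψ₂ ξ₂ = 1) (hξ₂2 : ∀ y, b₂ ξ₂ y = 0)
    (U : Submodule ℝ V)
    (hU₁ : IsLagrangianLike b₁ ψ₁ ξ₁ U) (hU₂ : IsLagrangianLike b₂ ψ₂ ξ₂ U) :
    ∃ L : V ≃ₗ[ℝ] V, (∀ u ∈ U, L u = u) ∧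
      (∀ v, ψ₂ (L v) = ψ₁ v) ∧
      (∀ u v, b₂ (L u) (L v) = b₁ u v) := by
  have hψU₁ : ∀ u ∈ U, ψ₁ u = 0 := aux_psiU b₁ ψ₁ U h₁.1 hU₁.1
  have hψU₂ : ∀ u ∈ U, ψ₂ u = 0 := aux_psiU b₂ ψ₂ U h₂.1 hU₂.1
  have hbU₁ : ∀ u ∈ U, ∀ v ∈ U, b₁ u v = 0 := aux_bU b₁ ψ₁ U h₁.1 hU₁.1
  have hbU₂ : ∀ u ∈ U, ∀ v ∈ U, b₂ u v = 0 := aux_bU b₂ ψ₂ U h₂.1 hU₂.1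
  obtain ⟨C₁, hC₁U, hC₁sup, hC₁iso⟩ := aux_exists_compl b₁ ψ₁ ξ₁ U h₁ hξ₁1 hξ₁2 hU₁
  obtain ⟨C₂, hC₂U, hC₂sup, hC₂iso⟩ := aux_exists_compl b₂ ψ₂ ξ₂ U h₂ hξ₂1 hξ₂2 hU₂
  have hC₁H : C₁ ≤ LinearMap.ker ψ₁ := hC₁sup ▸ le_sup_left
  have hC₂H : C₂ ≤ LinearMap.ker ψ₂ := hC₂sup ▸ le_sup_left
  have hψC₁ : ∀ c : C₁, ψ₁ (c : V) = 0 := fun c => hC₁H c.2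
  have hψC₂ : ∀ x ∈ C₂, ψ₂ x = 0 := fun x hx => hC₂H hx
  obtain ⟨-, hq₂⟩ := aux_pairing b₂ ψ₂ ξ₂ U h₂ hξ₂1 hξ₂2 hU₂ C₂ hC₂U hC₂sup
  set q₁ : C₁ →ₗ[ℝ] Module.Dual ℝ U :=
    (LinearMap.compl₁₂ b₁ U.subtype C₁.subtype).flip with hq₁def
  set q₂ : C₂ →ₗ[ℝ] Module.Dual ℝ U :=
    (LinearMap.compl₁₂ b₂ U.subtype C₂.subtype).flip with hq₂def
  set e₂ := LinearEquiv.ofBijective q₂ hq₂ with he₂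
  set T : C₁ →ₗ[ℝ] V := C₂.subtype ∘ₗ e₂.symm.toLinearMap ∘ₗ q₁ with hT
  have hTmem : ∀ c : C₁, T c ∈ C₂ := fun c => (e₂.symm (q₁ c)).2
  have hTpair : ∀ (u : U) (c : C₁), b₂ (u : V) (T c) = b₁ (u : V) (c : V) := by
    intro u c
    have h3 : q₂ (e₂.symm (q₁ c)) = q₁ c := e₂.apply_symm_apply _
    have h4 := LinearMap.congr_fun h3 u
    simpa [hq₁def, hq₂def, hT] using h4
  have hb₁ξr : ∀ y, b₁ y ξ₁ = 0 := fun y => by rw [h₁.1]; simp [hξ₁2]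
  have hb₂ξr : ∀ y, b₂ y ξ₂ = 0 := fun y => by rw [h₂.1]; simp [hξ₂2]
  have hTT : ∀ c c' : C₁, b₂ (T c) (T c') = 0 :=
    fun c c' => hC₂iso _ (hTmem c) _ (hTmem c')
  have hTu : ∀ (c : C₁) (u : U), b₂ (T c) (u : V) = b₁ (c : V) (u : V) := by
    intro c u
    rw [h₂.1, hTpair, h₁.1, neg_neg]
  -- complementarity
  have htop : ∀ W : Submodule ℝ V, W ⊔ U ⊔ span ℝ {ξ₁} = LinearMap.ker ψ₁ ⊔ span ℝ {ξ₁} →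
      True := fun _ _ => trivial
  have hcplU : IsCompl U (span ℝ {ξ₁} ⊔ C₁) := by
    constructor
    · rw [disjoint_iff, eq_bot_iff]
      rintro x ⟨hxU, hxW⟩
      obtain ⟨s, hs, c, hc, rfl⟩ := Submodule.mem_sup.mp hxW
      obtain ⟨a, rfl⟩ := Submodule.mem_span_singleton.mp hs
      have hψx : ψ₁ (a • ξ₁ + c) = 0 := hψU₁ _ hxU
      have hψc : ψ₁ c = 0 := hψC₁ ⟨c, hc⟩
      rw [map_add, map_smul, hξ₁1, hψc] at hψx
      have ha : a = 0 := by simpa using hψx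
      rw [ha, zero_smul, zero_add] at hxU ⊢
      have : c ∈ C₁ ⊓ U := ⟨hc, hxU⟩
      rw [hC₁U] at this
      exact this
    · rw [codisjoint_iff, eq_top_iff]
      intro v _
      have hv : v = (v - ψ₁ v • ξ₁) + ψ₁ v • ξ₁ := by abel
      have hvk : v - ψ₁ v • ξ₁ ∈ LinearMap.ker ψ₁ := by
        simp [LinearMap.mem_ker, hξ₁1]
      rw [← hC₁sup] at hvk
      obtain ⟨c, hc, u, hu, hcu⟩ := Submodule.mem_sup.mp hvk
      rw [hv, ← hcu]
      exact Submodule.add_mem _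
        (Submodule.add_mem _ (Submodule.mem_sup_right (Submodule.mem_sup_right hc))
          (Submodule.mem_sup_left hu))
        (Submodule.mem_sup_right (Submodule.mem_sup_left
          (Submodule.smul_mem _ _ (Submodule.mem_span_singleton_self ξ₁))))
  have hcplC : IsCompl C₁ (span ℝ {ξ₁} ⊔ U) := by
    constructor
    · rw [disjoint_iff, eq_bot_iff]
      rintro x ⟨hxC, hxW⟩
      obtain ⟨s, hs, u, hu, rfl⟩ := Submodule.mem_sup.mp hxW
      obtain ⟨a, rfl⟩ := Submodule.mem_span_singleton.mp hs
      have hψx : ψ₁ (a • ξ₁ + u) = 0 := hψC₁ ⟨_, hxC⟩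
      have hψu : ψ₁ u = 0 := hψU₁ u hu
      rw [map_add, map_smul, hξ₁1, hψu] at hψx
      have ha : a = 0 := by simpa using hψx
      rw [ha, zero_smul, zero_add] at hxC ⊢
      have : u ∈ C₁ ⊓ U := ⟨hxC, hu⟩
      rw [hC₁U] at this
      exact this
    · rw [codisjoint_iff, eq_top_iff]
      intro v _
      have hv : v = (v - ψ₁ v • ξ₁) + ψ₁ v • ξ₁ := by abel
      have hvk : v - ψ₁ v • ξ₁ ∈ LinearMap.ker ψ₁ := by
        simp [LinearMap.mem_ker, hξ₁1]
      rw [← hC₁sup] at hvk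
      obtain ⟨c, hc, u, hu, hcu⟩ := Submodule.mem_sup.mp hvk
      rw [hv, ← hcu]
      exact Submodule.add_mem _
        (Submodule.add_mem _ (Submodule.mem_sup_left hc)
          (Submodule.mem_sup_right (Submodule.mem_sup_right hu)))
        (Submodule.mem_sup_right (Submodule.mem_sup_left
          (Submodule.smul_mem _ _ (Submodule.mem_span_singleton_self ξ₁))))
  set πU := U.linearProjOfIsCompl _ hcplU with hπUdef
  set πC := C₁.linearProjOfIsCompl _ hcplC with hπCdef
  set L₀ : V →ₗ[ℝ] V := U.subtype ∘ₗ πU + T ∘ₗ πC + ψ₁.smulRight ξ₂ with hL₀def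
  have hL₀app : ∀ v, L₀ v = ((πU v : U) : V) + T (πC v) + ψ₁ v • ξ₂ := fun v => rfl
  -- decomposition
  have hdecomp : ∀ v : V, ∃ (u : U) (c : C₁) (a : ℝ),
      v = (u : V) + (c : V) + a • ξ₁ ∧ L₀ v = (u : V) + T c + a • ξ₂ := by
    intro v
    have hvtop : v ∈ U ⊔ (span ℝ {ξ₁} ⊔ C₁) := by
      rw [codisjoint_iff.mp hcplU.codisjoint]; trivial
    obtain ⟨u, hu, w, hw, hvw⟩ := Submodule.mem_sup.mp hvtop
    obtain ⟨s, hs, c, hc, hws⟩ := Submodule.mem_sup.mp hw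
    obtain ⟨a, rfl⟩ := Submodule.mem_span_singleton.mp hs
    refine ⟨⟨u, hu⟩, ⟨c, hc⟩, a, ?_, ?_⟩
    · rw [← hvw, ← hws]; abel
    · have hπUv : πU v = ⟨u, hu⟩ := by
        have e0 : πU w = 0 := Submodule.linearProjOfIsCompl_apply_right' hcplU hw
        have e1 : πU u = ⟨u, hu⟩ := Submodule.linearProjOfIsCompl_apply_left hcplU ⟨u, hu⟩
        rw [← hvw, map_add, e0, e1, add_zero]
      have hπCv : πC v = ⟨c, hc⟩ := by
        have e1 : πC u = 0 := Submodule.linearProjOfIsCompl_apply_right' hcplC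
          (Submodule.mem_sup_right hu)
        have e2 : πC (a • ξ₁) = 0 := Submodule.linearProjOfIsCompl_apply_right' hcplC
          (Submodule.mem_sup_left (Submodule.smul_mem _ _ (Submodule.mem_span_singleton_self ξ₁)))
        have e3 : πC c = ⟨c, hc⟩ := Submodule.linearProjOfIsCompl_apply_left hcplC ⟨c, hc⟩
        rw [← hvw, ← hws, map_add, map_add, e1, e2, e3, zero_add, zero_add]
      have hψv : ψ₁ v = a := by
        have e4 : ψ₁ c = 0 := hψC₁ ⟨c, hc⟩
        rw [← hvw, ← hws, map_add, map_add, map_smul, hξ₁1, hψU₁ u hu, e4]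
        simp
      rw [hL₀app, hπUv, hπCv, hψv]
  -- L₀ fixes U
  have hL₀U : ∀ u ∈ U, L₀ u = u := by
    intro u hu
    have hπUu : πU u = ⟨u, hu⟩ := Submodule.linearProjOfIsCompl_apply_left hcplU ⟨u, hu⟩
    have hπCu : πC u = 0 := Submodule.linearProjOfIsCompl_apply_right' hcplC
      (Submodule.mem_sup_right hu)
    rw [hL₀app, hπUu, hπCu, hψU₁ u hu, map_zero, zero_smul, add_zero, add_zero]
  -- pullback of ψ
  have hP2 : ∀ v, ψ₂ (L₀ v) = ψ₁ v := by
    intro v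
    obtain ⟨u, c, a, hv, hLv⟩ := hdecomp v
    rw [hLv, hv]
    rw [map_add, map_add, map_smul, map_add, map_add, map_smul]
    rw [hψU₂ u u.2, hψU₁ u u.2, hψC₂ _ (hTmem c), hψC₁ c, hξ₁1, hξ₂1]
  -- pullback of b
  have hP3 : ∀ v w, b₂ (L₀ v) (L₀ w) = b₁ v w := by
    intro v w
    obtain ⟨u, c, a, hv, hLv⟩ := hdecomp v
    obtain ⟨u', c', a', hw, hLw⟩ := hdecomp w
    rw [hLv, hLw, hv, hw]
    simp only [map_add, map_smul, LinearMap.add_apply, LinearMap.smul_apply, smul_eq_mul]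
    rw [hbU₂ _ u.2 _ u'.2, hbU₁ _ u.2 _ u'.2, hTpair u c', hTu c u', hTT c c',
      hC₁iso _ c.2 _ c'.2, hb₂ξr, hb₂ξr, hb₂ξr, hξ₂2, hb₁ξr, hb₁ξr, hb₁ξr, hξ₁2]
    rw [hξ₂2, hξ₁2]
  -- injectivity
  have hinj : Function.Injective L₀ := by
    rw [injective_iff_map_eq_zero]
    intro v hv0
    have hz : Itilde b₁ ψ₁ v = 0 := by
      ext y
      simp only [LinearMap.zero_apply]
      rw [Itilde_apply, ← hP3 v y, ← hP2 v, ← hP2 y, hv0]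
      simp
    exact h₁.2.2.injective (by rw [hz, map_zero])
  have hbijL : Function.Bijective L₀ :=
    ⟨hinj, (LinearMap.injective_iff_surjective).mp hinj⟩
  refine ⟨LinearEquiv.ofBijective L₀ hbijL, ?_, ?_, ?_⟩
  · intro u hu
    exact hL₀U u hu
  · intro v
    exact hP2 v
  · intro v w
    exact hP3 v w
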